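/- Let L : ℝ^{d₁} × ⋯ × ℝ^{d_M} → ℝ be differentiable, and for each m let g_m : ℝ^{p_m} → ℝ^{d_m} be differentiable. Fix w^t = (w₁^t, …, w_M^t) and define for each m the auxiliary loss ℓ_m(w_m) = (1/2)‖g_m(w_m) - (g_m(w_m^t) - ∂_m L(g₁(w₁^t), …, g_M(w_M^t)))‖², where ∂_m L is the partial gradient of L in its m-th argument. Then for every m, ∇ℓ_m evaluated at w_m^t equals the partial gradient with respect to w_m of (w₁,…,w_M) ↦ L(g₁(w₁),…,g_M(w_M)) evaluated at w^t. -/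

import Mathlib

open InnerProductSpace

theorem stmt_10 {M : ℕ} {d p : Fin M → ℕ}
    (L : PiLp 2 (fun m => EuclideanSpace ℝ (Fin (d m))) → ℝ)
    (g : ∀ m, EuclideanSpace ℝ (Fin (p m)) → EuclideanSpace ℝ (Fin (d m)))
    (hL : Differentiable ℝ L) (hg : ∀ m, Differentiable ℝ (g m))
    (wt : ∀ m, EuclideanSpace ℝ (Fin (p m)))
    (ℓ : ∀ m, EuclideanSpace ℝ (Fin (p m)) → ℝ)
    (hℓ : ∀ m w, ℓ m w = (1/2) *
      ‖g m w - (g m (wt m) -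
        gradient (fun u => L (WithLp.toLp 2 (Function.update (fun j => g j (wt j)) m u))) (g m (wt m)))‖ ^ 2) :
    ∀ m, gradient (ℓ m) (wt m) =
      gradient (fun u => L (WithLp.toLp 2 (fun j => g j (Function.update wt m u j)))) (wt m) := by
  classical
  intro m
  let z : PiLp 2 (fun m => EuclideanSpace ℝ (Fin (d m))) := WithLp.toLp 2 (fun j => g j (wt j))
  let φ : EuclideanSpace ℝ (Fin (d m)) → ℝ := fun u => L (WithLp.toLp 2 (Function.update z m u))
  let v : EuclideanSpace ℝ (Fin (d m)) := gradient φ (g m (wt m))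
  let D : EuclideanSpace ℝ (Fin (p m)) →L[ℝ] EuclideanSpace ℝ (Fin (d m)) :=
    fderiv ℝ (g m) (wt m)
  let e : PiLp 2 (fun m => EuclideanSpace ℝ (Fin (d m))) ≃L[ℝ] ∀ j, EuclideanSpace ℝ (Fin (d j)) :=
    PiLp.continuousLinearEquiv 2 ℝ _
  let S : EuclideanSpace ℝ (Fin (d m)) →L[ℝ] PiLp 2 (fun m => EuclideanSpace ℝ (Fin (d m))) :=
    (e.symm : (∀ j, EuclideanSpace ℝ (Fin (d j))) →L[ℝ] PiLp 2 (fun m => EuclideanSpace ℝ (Fin (d m)))).comp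
      (ContinuousLinearMap.pi (Pi.single m (ContinuousLinearMap.id ℝ _)))
  have hupd : HasFDerivAt (𝕜 := ℝ) (F := PiLp 2 (fun m => EuclideanSpace ℝ (Fin (d m))))
      (fun u => WithLp.toLp 2 (Function.update z m u)) S (g m (wt m)) := by
    have h1 := hasFDerivAt_update (𝕜 := ℝ)
      (E := fun j => EuclideanSpace ℝ (Fin (d j))) (e z) (g m (wt m))
    have h2 := (e.symm.hasFDerivAt (x := Function.update (e z) m (g m (wt m)))).comp
      (g m (wt m)) h1
    exact h2
  have hLz : HasFDerivAt L (fderiv ℝ L z) (WithLp.toLp 2 (Function.update z m (g m (wt m)))) := by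
    rw [show WithLp.toLp 2 (Function.update z m (g m (wt m))) = z from congrArg (WithLp.toLp 2) (Function.update_eq_self m z.ofLp)]
    exact (hL z).hasFDerivAt
  have hφ' : HasFDerivAt φ ((fderiv ℝ L z).comp S) (g m (wt m)) :=
    hLz.comp (g m (wt m)) hupd
  have hφgrad : ∀ k, inner (𝕜 := ℝ) v k = fderiv ℝ L z (S k) := by
    intro k
    have hvdef : v = (toDual ℝ _).symm (fderiv ℝ φ (g m (wt m))) := rfl
    rw [hvdef, hφ'.fderiv, toDual_symm_apply]
    rfl
  have hRHSfun : (fun u => L (WithLp.toLp 2 (fun j => g j (Function.update wt m u j))))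
      = fun u => φ (g m u) := by
    funext u
    congr 2
    funext j
    rcases eq_or_ne j m with rfl | hj
    · simp [z]
    · simp [Function.update_of_ne hj, z]
  have hRHS : HasFDerivAt (fun u => L (WithLp.toLp 2 (fun j => g j (Function.update wt m u j))))
      (((fderiv ℝ L z).comp S).comp D) (wt m) := by
    rw [hRHSfun]
    exact hφ'.comp _ ((hg m (wt m)).hasFDerivAt)
  let c : EuclideanSpace ℝ (Fin (d m)) := g m (wt m) - v
  have hℓfun : ℓ m = fun w => (1/2 : ℝ) * inner (𝕜 := ℝ) (g m w - c) (g m w - c) := by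
    funext w
    rw [hℓ m w, real_inner_self_eq_norm_sq]
  have hA : HasFDerivAt (fun w => g m w - c) D (wt m) :=
    ((hg m (wt m)).hasFDerivAt).sub_const c
  have hLHS : HasFDerivAt (ℓ m)
      ((1/2 : ℝ) • ((fderivInnerCLM ℝ (g m (wt m) - c, g m (wt m) - c)).comp (D.prod D)))
      (wt m) := by
    rw [hℓfun]
    exact (hA.inner ℝ hA).const_mul _
  have ha : g m (wt m) - c = v := sub_sub_cancel _ _
  have h1 := (hasFDerivAt_iff_hasGradientAt.mp hLHS).gradient
  have h2 := (hasFDerivAt_iff_hasGradientAt.mp hRHS).gradient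
  rw [h1, h2]
  congr 1
  ext k
  simp only [ContinuousLinearMap.smul_apply, ContinuousLinearMap.comp_apply,
    ContinuousLinearMap.prod_apply, fderivInnerCLM_apply, ha, smul_eq_mul,
    ← hφgrad, real_inner_comm v (D k)]
  ring
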